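/- Discounted mean-variance performance difference formula: with ξ = μ u defined via u = (1-α)(I - αP)^{-1} f where f = r - β(r - η e)_⊙^2, η = (1-α)μ(I - αP)^{-1} r, and primed quantities defined analogously for (P', r'), for any λ ∈ ℝ: ξ' - ξ = μ (I - αP')^{-1} [ (1-α)(f'_λ - f_λ) + α (P' - P) u_λ ] + β(η' - λ)^2 - β(η - λ)^2, where f_λ = r - β(r - λ e)_⊙^2, f'_λ = r' - β(r' - λ e)_⊙^2, and u_λ = (1-α)(I - αP)^{-1} f_λ. -/
import Mathlib
open Matrix

lemma stoch_det_isUnit {n : ℕ} (P : Matrix (Fin n) (Fin n) ℝ)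
    (hPnn : ∀ i j, 0 ≤ P i j) (hProw : ∀ i, ∑ j, P i j = 1)
    {α : ℝ} (hα0 : 0 < α) (hα1 : α < 1) :
    IsUnit (1 - α • P).det := by
  rw [isUnit_iff_ne_zero]
  apply det_ne_zero_of_sum_row_lt_diag
  intro k
  have hPk1 : P k k ≤ 1 := by
    have := Finset.single_le_sum (f := fun j => P k j) (fun j _ => hPnn k j) (Finset.mem_univ k)
    simpa [hProw k] using this
  have hsum : ∑ j ∈ Finset.univ.erase k, P k j = 1 - P k k := by
    rw [Finset.sum_erase_eq_sub (Finset.mem_univ k), hProw k]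
  calc ∑ j ∈ Finset.univ.erase k, ‖(1 - α • P) k j‖
      = ∑ j ∈ Finset.univ.erase k, α * P k j := by
        refine Finset.sum_congr rfl fun j hj => ?_
        have hjk : k ≠ j := (Finset.ne_of_mem_erase hj).symm
        simp [Matrix.sub_apply, Matrix.smul_apply, Matrix.one_apply, hjk,
          abs_of_nonneg hα0.le, abs_of_nonneg (hPnn k j)]
    _ = α * (1 - P k k) := by rw [← Finset.mul_sum, hsum]
    _ < 1 - α * P k k := by nlinarith [hPnn k k]
    _ = ‖(1 - α • P) k k‖ := by
        have h0 : (0:ℝ) ≤ 1 - α * P k k := by nlinarith [hPnn k k]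
        simp [Matrix.sub_apply, Matrix.smul_apply, Matrix.one_apply, abs_of_nonneg h0]

lemma aux_key {n : ℕ} (ν r : Fin n → ℝ) (β η l c : ℝ)
    (hs : c * ∑ i, ν i = 1) (hr : c * ∑ i, ν i * r i = η) :
    c * ∑ i, ν i * (r i - β * (r i - η) ^ 2) =
      c * ∑ i, ν i * (r i - β * (r i - l) ^ 2) + β * (η - l) ^ 2 := by
  have expand : ∑ i, ν i * (r i - β * (r i - η) ^ 2) =
      ∑ i, ν i * (r i - β * (r i - l) ^ 2) + (β * (η - l) * 2) * ∑ i, ν i * r i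
        - (β * (η - l) * (η + l)) * ∑ i, ν i := by
    rw [Finset.mul_sum, Finset.mul_sum, ← Finset.sum_add_distrib, ← Finset.sum_sub_distrib]
    exact Finset.sum_congr rfl fun i _ => by ring
  rw [expand]
  linear_combination (2 * β * (η - l)) * hr - (β * (η - l) * (η + l)) * hs

/-- Discounted mean-variance performance difference formula. -/
theorem stmt_10 {n : ℕ} (P P' : Matrix (Fin n) (Fin n) ℝ)
    (hPnn : ∀ i j, 0 ≤ P i j) (hProw : ∀ i, ∑ j, P i j = 1)
    (hP'nn : ∀ i j, 0 ≤ P' i j) (hP'row : ∀ i, ∑ j, P' i j = 1)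
    (μ : Fin n → ℝ) (hμnn : ∀ i, 0 ≤ μ i) (hμsum : ∑ i, μ i = 1)
    (r r' : Fin n → ℝ) (α β l : ℝ) (hα0 : 0 < α) (hα1 : α < 1) (hβ : 0 < β)
    (η η' ξ ξ' : ℝ) (f f' fl fl' ul : Fin n → ℝ)
    (hη : η = (1 - α) * ((μ ᵥ* (1 - α • P)⁻¹) ⬝ᵥ r))
    (hη' : η' = (1 - α) * ((μ ᵥ* (1 - α • P')⁻¹) ⬝ᵥ r'))
    (hf : f = fun i => r i - β * (r i - η) ^ 2)
    (hf' : f' = fun i => r' i - β * (r' i - η') ^ 2)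
    (hξ : ξ = μ ⬝ᵥ ((1 - α) • ((1 - α • P)⁻¹ *ᵥ f)))
    (hξ' : ξ' = μ ⬝ᵥ ((1 - α) • ((1 - α • P')⁻¹ *ᵥ f')))
    (hfl : fl = fun i => r i - β * (r i - l) ^ 2)
    (hfl' : fl' = fun i => r' i - β * (r' i - l) ^ 2)
    (hul : ul = (1 - α) • ((1 - α • P)⁻¹ *ᵥ fl)) :
    ξ' - ξ =
      μ ⬝ᵥ ((1 - α • P')⁻¹ *ᵥ ((1 - α) • (fl' - fl) + α • ((P' - P) *ᵥ ul)))
        + β * (η' - l) ^ 2 - β * (η - l) ^ 2 := by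
  set B : Matrix (Fin n) (Fin n) ℝ := 1 - α • P with hB
  set B' : Matrix (Fin n) (Fin n) ℝ := 1 - α • P' with hB'
  have hdet : IsUnit B.det := stoch_det_isUnit P hPnn hProw hα0 hα1
  have hdet' : IsUnit B'.det := stoch_det_isUnit P' hP'nn hP'row hα0 hα1
  set ν : Fin n → ℝ := μ ᵥ* B⁻¹ with hν
  set ν' : Fin n → ℝ := μ ᵥ* B'⁻¹ with hν'
  have hνB : ν ᵥ* B = μ := by
    rw [hν, vecMul_vecMul, Matrix.nonsing_inv_mul B hdet, vecMul_one]
  have hν'B' : ν' ᵥ* B' = μ := by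
    rw [hν', vecMul_vecMul, Matrix.nonsing_inv_mul B' hdet', vecMul_one]
  -- row sums of B
  have hBe : B *ᵥ (fun _ => (1:ℝ)) = fun _ => 1 - α := by
    funext i
    simp only [hB, mulVec, dotProduct, Matrix.sub_apply, Matrix.smul_apply, smul_eq_mul,
      mul_one, Finset.sum_sub_distrib, ← Finset.mul_sum, hProw i]
    simp [Matrix.one_apply]
  have hB'e : B' *ᵥ (fun _ => (1:ℝ)) = fun _ => 1 - α := by
    funext i
    simp only [hB', mulVec, dotProduct, Matrix.sub_apply, Matrix.smul_apply, smul_eq_mul,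
      mul_one, Finset.sum_sub_distrib, ← Finset.mul_sum, hP'row i]
    simp [Matrix.one_apply]
  have hs : (1 - α) * ∑ i, ν i = 1 := by
    have h1 : ν ⬝ᵥ (B *ᵥ (fun _ => (1:ℝ))) = μ ⬝ᵥ (fun _ => (1:ℝ)) := by
      rw [dotProduct_mulVec, hνB]
    rw [hBe] at h1
    simp only [dotProduct, mul_one] at h1
    rw [hμsum] at h1
    rw [Finset.mul_sum]
    simp_rw [mul_comm ((1:ℝ) - α)]
    exact h1
  have hs' : (1 - α) * ∑ i, ν' i = 1 := by
    have h1 : ν' ⬝ᵥ (B' *ᵥ (fun _ => (1:ℝ))) = μ ⬝ᵥ (fun _ => (1:ℝ)) := by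
      rw [dotProduct_mulVec, hν'B']
    rw [hB'e] at h1
    simp only [dotProduct, mul_one] at h1
    rw [hμsum] at h1
    rw [Finset.mul_sum]
    simp_rw [mul_comm ((1:ℝ) - α)]
    exact h1
  have hr : (1 - α) * ∑ i, ν i * r i = η := by
    rw [hη]; rfl
  have hr' : (1 - α) * ∑ i, ν' i * r' i = η' := by
    rw [hη']; rfl
  -- ξ in terms of ν
  have hξν : ξ = (1 - α) * ∑ i, ν i * fl i + β * (η - l) ^ 2 := by
    have : ξ = (1 - α) * ∑ i, ν i * f i := by
      rw [hξ, dotProduct_smul, smul_eq_mul, dotProduct_mulVec]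
      rfl
    rw [this, hf, hfl]
    exact aux_key ν r β η l (1 - α) hs hr
  have hξν' : ξ' = (1 - α) * ∑ i, ν' i * fl' i + β * (η' - l) ^ 2 := by
    have : ξ' = (1 - α) * ∑ i, ν' i * f' i := by
      rw [hξ', dotProduct_smul, smul_eq_mul, dotProduct_mulVec]
      rfl
    rw [this, hf', hfl']
    exact aux_key ν' r' β η' l (1 - α) hs' hr'
  -- the RHS matrix term
  have hPP : α • ((P' - P) *ᵥ ul) = B *ᵥ ul - B' *ᵥ ul := by
    rw [← smul_mulVec, ← sub_mulVec]
    congr 1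
    rw [hB, hB', smul_sub]
    abel
  have hBul : ν' ⬝ᵥ (B *ᵥ ul) = (1 - α) * ∑ i, ν' i * fl i := by
    rw [hul, mulVec_smul, dotProduct_smul, smul_eq_mul, mulVec_mulVec,
      Matrix.mul_nonsing_inv B hdet, one_mulVec]
    rfl
  have hB'ul : ν' ⬝ᵥ (B' *ᵥ ul) = (1 - α) * ∑ i, ν i * fl i := by
    rw [dotProduct_mulVec, hν'B', hul, dotProduct_smul, smul_eq_mul, dotProduct_mulVec]
    rfl
  have hRHS : μ ⬝ᵥ (B'⁻¹ *ᵥ ((1 - α) • (fl' - fl) + α • ((P' - P) *ᵥ ul)))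
      = (1 - α) * ∑ i, ν' i * fl' i - (1 - α) * ∑ i, ν i * fl i := by
    rw [dotProduct_mulVec, ← hν']
    simp only [dotProduct_add, dotProduct_smul, hPP, dotProduct_sub, hBul, hB'ul, smul_eq_mul]
    have e1 : ν' ⬝ᵥ fl' = ∑ i, ν' i * fl' i := rfl
    have e2 : ν' ⬝ᵥ fl = ∑ i, ν' i * fl i := rfl
    rw [e1, e2]
    ring
  rw [hRHS, hξν, hξν']
  ring
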